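/- Let V be a d×n real matrix with columns v_1,…,v_n, let s be an integer with 1 ≤ s ≤ d, and let x̂ ∈ ℝⁿ with x̂_i ≥ 0 for all i. Let λ₁ ≥ ⋯ ≥ λ_d ≥ 0 be the eigenvalues of X̂ = ∑_{i=1}^n x̂_i v_i v_iᵀ and let k = k(λ,s). Then ∑_{S ⊆ {1,…,n}, |S| = s} (∏_{i∈S} x̂_i) · det(V_Sᵀ V_S) ≥ (∏_{i=1}^k λ_i) · ((1/(s−k)) ∑_{i=k+1}^d λ_i)^{s−k}, where V_S is the d×s submatrix of V with columns indexed by S. -/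

import Mathlib

open Matrix Finset

noncomputable section

/-- `lam` lists the eigenvalues (with multiplicity) of the real symmetric matrix `X`,
via an orthogonal spectral decomposition. -/
def IsSpectralDecomp {m : Type*} [Fintype m] [DecidableEq m]
    (X : Matrix m m ℝ) (lam : m → ℝ) : Prop :=
  ∃ Q : Matrix m m ℝ, Q * Qᵀ = 1 ∧ X = Q * Matrix.diagonal lam * Qᵀ

/-- Principal submatrix `C_{S,S}`. -/
def subSub {n : ℕ} (C : Matrix (Fin n) (Fin n) ℝ) (S : Finset (Fin n)) :
    Matrix {i // i ∈ S} {i // i ∈ S} ℝ :=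
  Matrix.of fun a b => C a.1 b.1

/-- The value `λ_{i+1}` (1-based), i.e. the coordinate of `lam` of 0-based index `i`;
`0` when out of range. -/
def extVal {d : ℕ} (lam : Fin d → ℝ) : ℕ → ℝ :=
  fun i => if h : i < d then lam ⟨i, h⟩ else 0

/-- `∑_{i=k+1}^d λ_i` (1-based), i.e. the sum of the coordinates of 0-based index `≥ k`. -/
def tailSum {d : ℕ} (lam : Fin d → ℝ) (k : ℕ) : ℝ :=
  ∑ i ∈ Finset.univ.filter (fun i : Fin d => k ≤ (i : ℕ)), lam i

/-- `k = k(λ, s)`: an integer `0 ≤ k < s` with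
`λ_k > (1/(s-k)) ∑_{i=k+1}^d λ_i ≥ λ_{k+1}`, with the convention `λ₀ = +∞`. -/
def IsKIndex {d : ℕ} (lam : Fin d → ℝ) (s k : ℕ) : Prop :=
  k < s ∧ extVal lam k ≤ tailSum lam k / ((s : ℝ) - k) ∧
    (k = 0 ∨ tailSum lam k / ((s : ℝ) - k) < extVal lam (k - 1))

/-- `P` is the Moore–Penrose pseudoinverse of `X`. -/
def IsPseudoInv {d : ℕ} (X P : Matrix (Fin d) (Fin d) ℝ) : Prop :=
  X * P * X = X ∧ P * X * P = P ∧ (X * P)ᵀ = X * P ∧ (P * X)ᵀ = P * X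

section Aux
open Equiv

variable {R : Type*} [CommRing R]

/-- generalized principal submatrix -/
def pss {ι : Type*} (C : Matrix ι ι R) (S : Finset ι) :
    Matrix {i // i ∈ S} {i // i ∈ S} R :=
  Matrix.of fun a b => C a.1 b.1

lemma det_pss {ι : Type*} [DecidableEq ι] (C : Matrix ι ι R) (S : Finset ι) :
    (pss C S).det = ∑ τ : Perm {i // i ∈ S}, Equiv.Perm.sign τ • ∏ a : {i // i ∈ S}, C (τ a).1 a.1 := by
  rw [Matrix.det_apply]; rfl

lemma mem_iff_of_fix {m : Type*} [DecidableEq m] {S : Finset m} {σ : Perm m}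
    (hσ : ∀ i ∉ S, σ i = i) : ∀ x, x ∈ S ↔ σ x ∈ S := by
  intro x
  constructor
  · intro hx
    by_contra h
    have := hσ (σ x) h
    exact h (by rw [σ.injective this]; exact hx)
  · intro hx
    by_contra h
    rw [hσ x h] at hx; exact h hx

lemma fixed_sum_eq_det_pss {m : Type*} [Fintype m] [DecidableEq m]
    (M : Matrix m m R) (S : Finset m) :
    ∑ σ ∈ (univ : Finset (Perm m)).filter (fun σ => ∀ i ∉ S, σ i = i),
        Equiv.Perm.sign σ • ∏ i ∈ S, M (σ i) i
      = (pss M S).det := by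
  rw [det_pss]
  refine Finset.sum_bij'
    (i := fun σ hσ => σ.subtypePerm (fun x => (mem_iff_of_fix (by simpa using hσ) x).symm))
    (j := fun τ _ => Equiv.Perm.ofSubtype τ) ?_ ?_ ?_ ?_ ?_
  · intro τ hτ; exact mem_univ _
  · intro τ _
    simp only [mem_filter, mem_univ, true_and]
    intro i hi
    exact Equiv.Perm.ofSubtype_apply_of_not_mem τ hi
  · intro σ hσ
    ext i
    by_cases hi : i ∈ S
    · rw [Equiv.Perm.ofSubtype_apply_of_mem _ hi]; rfl
    · rw [Equiv.Perm.ofSubtype_apply_of_not_mem _ hi]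
      exact ((by simpa using hσ : ∀ i ∉ S, σ i = i) i hi).symm
  · intro τ _
    ext a
    simp [Equiv.Perm.subtypePerm_apply, Equiv.Perm.ofSubtype_apply_of_mem _ a.2]
  · intro σ hσ
    have hfix : ∀ i ∉ S, σ i = i := by simpa using hσ
    have hσeq : Equiv.Perm.ofSubtype (σ.subtypePerm (fun x => (mem_iff_of_fix hfix x).symm)) = σ := by
      ext i
      by_cases hi : i ∈ S
      · rw [Equiv.Perm.ofSubtype_apply_of_mem _ hi]; rfl
      · rw [Equiv.Perm.ofSubtype_apply_of_not_mem _ hi]; exact (hfix i hi).symm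
    have hsign : Equiv.Perm.sign σ = Equiv.Perm.sign (σ.subtypePerm (fun x => (mem_iff_of_fix hfix x).symm)) := by
      conv_lhs => rw [← hσeq]
      rw [Equiv.Perm.sign_ofSubtype]
    rw [hsign]
    congr 1
    rw [← Finset.prod_attach S (fun i => M (σ i) i)]
    rfl

lemma det_one_add_smul_eq_sum_pss {m : Type*} [Fintype m] [DecidableEq m]
    (t : R) (M : Matrix m m R) :
    (1 + t • M).det = ∑ S ∈ (univ : Finset (Finset m)), t ^ S.card * (pss M S).det := by
  rw [Matrix.det_apply]
  have h1 : ∀ σ : Perm m, ∏ i, (1 + t • M) (σ i) i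
      = ∑ S ∈ (univ : Finset m).powerset,
          (∏ i ∈ S, (t * M (σ i) i)) * ∏ i ∈ univ \ S, (1 : Matrix m m R) (σ i) i := by
    intro σ
    rw [← Finset.prod_add]
    apply Finset.prod_congr rfl
    intro i _
    simp [Matrix.add_apply, Matrix.smul_apply, add_comm, smul_eq_mul]
  simp_rw [h1, Finset.smul_sum]
  rw [Finset.sum_comm]
  rw [Finset.powerset_univ]
  apply Finset.sum_congr rfl
  intro S _
  have h2 : ∀ σ : Perm m,
      Equiv.Perm.sign σ • ((∏ i ∈ S, (t * M (σ i) i)) * ∏ i ∈ univ \ S, (1 : Matrix m m R) (σ i) i)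
      = if (∀ i ∉ S, σ i = i) then t ^ S.card * (Equiv.Perm.sign σ • ∏ i ∈ S, M (σ i) i) else 0 := by
    intro σ
    by_cases hσ : ∀ i ∉ S, σ i = i
    · rw [if_pos hσ]
      have : ∏ i ∈ univ \ S, (1 : Matrix m m R) (σ i) i = 1 := by
        apply Finset.prod_eq_one
        intro i hi
        rw [hσ i (by simpa using hi)]
        exact Matrix.one_apply_eq i
      rw [this, mul_one, Finset.prod_mul_distrib, Finset.prod_const]
      rcases Int.units_eq_one_or (Equiv.Perm.sign σ) with h | h <;> simp [h] <;> ring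
    · rw [if_neg hσ]
      push_neg at hσ
      obtain ⟨i, hi, hne⟩ := hσ
      have : ∏ j ∈ univ \ S, (1 : Matrix m m R) (σ j) j = 0 := by
        apply Finset.prod_eq_zero (i := i) (by simpa using hi)
        exact Matrix.one_apply_ne hne
      simp [this]
  simp_rw [h2]
  rw [Finset.sum_ite, Finset.sum_const_zero, add_zero, ← Finset.mul_sum]
  congr 1
  exact fixed_sum_eq_det_pss M S

open Polynomial in
lemma coeff_sum_pow {γ : Type*} [Fintype γ] [DecidableEq γ] (c : Finset γ → ℝ) (s : ℕ) :
    (∑ S ∈ (univ : Finset (Finset γ)), (X : ℝ[X]) ^ S.card * C (c S)).coeff s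
      = ∑ S ∈ (univ : Finset γ).powersetCard s, c S := by
  rw [Polynomial.finset_sum_coeff]
  simp_rw [mul_comm ((X : ℝ[X]) ^ _), Polynomial.C_mul_X_pow_eq_monomial, Polynomial.coeff_monomial]
  rw [Finset.powersetCard_eq_filter, Finset.powerset_univ, Finset.sum_filter]

lemma det_pss_diagonal {ι : Type*} [DecidableEq ι] (lam : ι → R) (T : Finset ι) :
    (pss (Matrix.diagonal lam) T).det = ∏ i ∈ T, lam i := by
  have : pss (Matrix.diagonal lam) T = Matrix.diagonal (fun a : {i // i ∈ T} => lam a.1) := by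
    ext a b
    by_cases h : a = b
    · subst h; simp [pss, Matrix.diagonal_apply_eq]
    · rw [Matrix.diagonal_apply_ne _ h]
      exact Matrix.diagonal_apply_ne _ (fun hc => h (Subtype.ext hc))
  rw [this, Matrix.det_diagonal]; exact Finset.prod_coe_sort T lam

lemma det_pss_scaled {n : ℕ} (g : Fin n → ℝ) (B : Matrix (Fin n) (Fin n) ℝ) (S : Finset (Fin n)) :
    (pss (Matrix.of fun i j => g i * B i j * g j) S).det
      = (∏ i ∈ S, g i) ^ 2 * (pss B S).det := by
  have : pss (Matrix.of fun i j => g i * B i j * g j) S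
      = Matrix.diagonal (fun a : {i // i ∈ S} => g a.1) * pss B S
          * Matrix.diagonal (fun a : {i // i ∈ S} => g a.1) := by
    ext a b
    simp [pss, Matrix.mul_diagonal, Matrix.diagonal_mul]
  rw [this, Matrix.det_mul, Matrix.det_mul, Matrix.det_diagonal]
  rw [show ∏ a : {i // i ∈ S}, g a.1 = ∏ i ∈ S, g i from Finset.prod_coe_sort S g]
  ring

open Polynomial in
lemma main_identity (d n : ℕ) (V : Matrix (Fin d) (Fin n) ℝ) (x : Fin n → ℝ) (hx0 : ∀ i, 0 ≤ x i)
    (lam : Fin d → ℝ) (Q : Matrix (Fin d) (Fin d) ℝ) (hQ : Q * Qᵀ = 1)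
    (hX : (∑ i, x i • vecMulVec (fun a => V a i) (fun a => V a i))
        = Q * Matrix.diagonal lam * Qᵀ)
    (s : ℕ) :
    ∑ S ∈ (univ : Finset (Fin n)).powersetCard s, (∏ i ∈ S, x i) * (pss (Vᵀ * V) S).det
      = ∑ T ∈ (univ : Finset (Fin d)).powersetCard s, ∏ i ∈ T, lam i := by
  set W : Matrix (Fin d) (Fin n) ℝ := Matrix.of fun a i => V a i * Real.sqrt (x i) with hW
  have hWWt : W * Wᵀ = Q * Matrix.diagonal lam * Qᵀ := by
    rw [← hX]
    ext a b
    rw [Matrix.mul_apply]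
    rw [Matrix.sum_apply]
    apply Finset.sum_congr rfl
    intro i _
    simp only [Matrix.smul_apply, Matrix.vecMulVec_apply, smul_eq_mul, hW,
      Matrix.transpose_apply, Matrix.of_apply]
    linear_combination (V a i * V b i) * (Real.mul_self_sqrt (hx0 i))
  have hWtW : ∀ S : Finset (Fin n), (pss (Wᵀ * W) S).det
      = (∏ i ∈ S, x i) * (pss (Vᵀ * V) S).det := by
    intro S
    have h1 : Wᵀ * W = Matrix.of fun i j =>
        Real.sqrt (x i) * (Vᵀ * V) i j * Real.sqrt (x j) := by
      ext i j
      simp only [Matrix.mul_apply, Matrix.transpose_apply, Matrix.of_apply, hW, Finset.sum_mul,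
        Finset.mul_sum]
      apply Finset.sum_congr rfl
      intro a _
      ring
    rw [h1, det_pss_scaled]
    congr 1
    rw [← Finset.prod_pow]
    apply Finset.prod_congr rfl
    intro i _
    rw [sq, Real.mul_self_sqrt (hx0 i)]
  -- polynomial identity
  set Wp : Matrix (Fin d) (Fin n) ℝ[X] := W.map C with hWp
  set Qp : Matrix (Fin d) (Fin d) ℝ[X] := Q.map C with hQp
  have hQpQ : Qp * Qpᵀ = 1 := by
    rw [hQp, ← Matrix.transpose_map, ← Matrix.map_mul, hQ, Matrix.map_one C C.map_zero C.map_one]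
  have polyid :
      (∑ S ∈ (univ : Finset (Finset (Fin n))), (X : ℝ[X]) ^ S.card * C ((pss (Wᵀ * W) S).det))
      = ∑ T ∈ (univ : Finset (Finset (Fin d))), (X : ℝ[X]) ^ T.card * C (∏ i ∈ T, lam i) := by
    have l1 : (∑ S ∈ (univ : Finset (Finset (Fin n))), (X : ℝ[X]) ^ S.card
          * C ((pss (Wᵀ * W) S).det))
        = (1 + (X : ℝ[X]) • ((Wᵀ * W).map C)).det := by
      rw [det_one_add_smul_eq_sum_pss]
      apply Finset.sum_congr rfl
      intro S _
      congr 1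
      rw [RingHom.map_det]
      rfl
    have l2 : (1 + (X : ℝ[X]) • ((Wᵀ * W).map C)).det
        = (1 + (X : ℝ[X]) • ((W * Wᵀ).map C)).det := by
      rw [Matrix.map_mul, Matrix.map_mul, Matrix.transpose_map]
      rw [← Matrix.smul_mul, Matrix.det_one_add_mul_comm, Matrix.mul_smul]
    have l3 : (1 + (X : ℝ[X]) • ((W * Wᵀ).map C)).det = (1 + (X : ℝ[X]) • ((Matrix.diagonal lam).map C)).det := by
      rw [hWWt]
      have conj : (1 : Matrix (Fin d) (Fin d) ℝ[X]) + (X : ℝ[X]) • ((Q * Matrix.diagonal lam * Qᵀ).map C)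
          = Qp * (1 + (X : ℝ[X]) • ((Matrix.diagonal lam).map C)) * Qpᵀ := by
        rw [Matrix.map_mul, Matrix.map_mul, Matrix.transpose_map, ← hQp]
        rw [Matrix.mul_add, Matrix.add_mul, Matrix.mul_one, hQpQ]
        congr 1
        rw [Matrix.mul_smul, Matrix.smul_mul]
      rw [conj, Matrix.det_mul, Matrix.det_mul, Matrix.det_transpose]
      have hdet1 : Qp.det * Qp.det = 1 := by
        have : Qp.det * Qp.det = (Qp * Qpᵀ).det := by
          rw [Matrix.det_mul, Matrix.det_transpose]
        rw [this, hQpQ, Matrix.det_one]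
      calc Qp.det * (1 + (X : ℝ[X]) • ((Matrix.diagonal lam).map C)).det * Qp.det
          = (Qp.det * Qp.det) * (1 + (X : ℝ[X]) • ((Matrix.diagonal lam).map C)).det := by ring
        _ = _ := by rw [hdet1, one_mul]
    have l4 : (1 + (X : ℝ[X]) • ((Matrix.diagonal lam).map C)).det
        = ∑ T ∈ (univ : Finset (Finset (Fin d))), (X : ℝ[X]) ^ T.card * C (∏ i ∈ T, lam i) := by
      rw [det_one_add_smul_eq_sum_pss]
      apply Finset.sum_congr rfl
      intro T _
      congr 1
      rw [Matrix.diagonal_map C.map_zero]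
      rw [det_pss_diagonal]
      rw [map_prod]
    rw [l1, l2, l3, l4]
  have := congrArg (fun p : ℝ[X] => p.coeff s) polyid
  simp only [coeff_sum_pow] at this
  rw [← this]
  apply Finset.sum_congr rfl
  intro S _
  rw [hWtW]

def esum {ι : Type*} [DecidableEq ι] (A : Finset ι) (r : ℕ) (ν : ι → ℝ) : ℝ :=
  ∑ U ∈ A.powersetCard r, ∏ i ∈ U, ν i

lemma esum_nonneg {ι : Type*} [DecidableEq ι] {A : Finset ι} {r : ℕ} {ν : ι → ℝ}
    (h : ∀ i ∈ A, 0 ≤ ν i) : 0 ≤ esum A r ν :=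
  Finset.sum_nonneg fun U hU => Finset.prod_nonneg fun i hi =>
    h i ((Finset.mem_powersetCard.mp hU).1 hi)

lemma esum_congr {ι : Type*} [DecidableEq ι] {A : Finset ι} {r : ℕ} {ν ν' : ι → ℝ}
    (h : ∀ i ∈ A, ν i = ν' i) : esum A r ν = esum A r ν' :=
  Finset.sum_congr rfl fun U hU => Finset.prod_congr rfl fun i hi =>
    h i ((Finset.mem_powersetCard.mp hU).1 hi)

lemma esum_zero' {ι : Type*} [DecidableEq ι] (A : Finset ι) (ν : ι → ℝ) : esum A 0 ν = 1 := by
  simp [esum]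

lemma esum_one {ι : Type*} [DecidableEq ι] (A : Finset ι) (ν : ι → ℝ) :
    esum A 1 ν = ∑ i ∈ A, ν i := by
  rw [esum, Finset.powersetCard_one, Finset.sum_map]
  simp

lemma esum_insert {ι : Type*} [DecidableEq ι] {A : Finset ι} {j : ι} (hj : j ∉ A)
    (r : ℕ) (ν : ι → ℝ) :
    esum (insert j A) (r + 1) ν = esum A (r + 1) ν + ν j * esum A r ν := by
  rw [esum, Finset.powersetCard_succ_insert hj, Finset.sum_union]
  · congr 1
    have hinj : ∀ U ∈ A.powersetCard r, ∀ U' ∈ A.powersetCard r,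
        insert j U = insert j U' → U = U' := by
      intro U hU U' hU' hEq
      have hjU : j ∉ U := fun h => hj ((Finset.mem_powersetCard.mp hU).1 h)
      have hjU' : j ∉ U' := fun h => hj ((Finset.mem_powersetCard.mp hU').1 h)
      rw [← Finset.erase_insert hjU, ← Finset.erase_insert hjU', hEq]
    rw [Finset.sum_image hinj, esum, Finset.mul_sum]
    apply Finset.sum_congr rfl
    intro U hU
    rw [Finset.prod_insert (fun h => hj ((Finset.mem_powersetCard.mp hU).1 h))]
  · rw [Finset.disjoint_left]
    intro U hU hU'
    obtain ⟨U', hU', rfl⟩ := Finset.mem_image.mp hU'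
    exact hj ((Finset.mem_powersetCard.mp hU).1 (Finset.mem_insert_self j U'))

lemma esum_pair {ι : Type*} [DecidableEq ι] {A : Finset ι} {i j : ι}
    (hij : i ≠ j) (hi : i ∈ A) (hj : j ∈ A) (m : ℕ) (ν : ι → ℝ) :
    esum A (m + 2) ν
      = ν i * ν j * esum ((A.erase i).erase j) m ν
        + (ν i + ν j) * esum ((A.erase i).erase j) (m + 1) ν
        + esum ((A.erase i).erase j) (m + 2) ν := by
  set A' := (A.erase i).erase j with hA'
  have hjA' : j ∉ A' := Finset.notMem_erase _ _
  have hiA' : i ∉ insert j A' := by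
    simp only [Finset.mem_insert]
    rintro (rfl | h)
    · exact hij rfl
    · exact Finset.notMem_erase _ _ (Finset.mem_of_mem_erase h)
  have h1 : insert j A' = A.erase i :=
    Finset.insert_erase (Finset.mem_erase.mpr ⟨hij.symm, hj⟩)
  have hA : A = insert i (insert j A') := by
    rw [h1, Finset.insert_erase hi]
  rw [hA, esum_insert hiA', esum_insert hjA', esum_insert hjA']
  ring

lemma sum_update_pair {ι : Type*} [DecidableEq ι] {A : Finset ι} {i j : ι}
    (hi : i ∈ A) (hj : j ∈ A) (hij : i ≠ j) (μ : ι → ℝ) (a b : ℝ) :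
    ∑ t ∈ A, Function.update (Function.update μ i a) j b t
      = ∑ t ∈ A, μ t + ((a + b) - (μ i + μ j)) := by
  have hij' : i ∈ A \ {j} := Finset.mem_sdiff.mpr ⟨hi, by simpa using hij⟩
  rw [Finset.sum_update_of_mem hj, Finset.sum_update_of_mem hij']
  rw [Finset.sum_eq_sum_sdiff_singleton_add hj μ,
    Finset.sum_eq_sum_sdiff_singleton_add hij' μ]
  ring

lemma smooth_step {ι : Type*} [DecidableEq ι] {A : Finset ι} {i j : ι}
    (hij : i ≠ j) (hi : i ∈ A) (hj : j ∈ A) (r : ℕ) (μ : ι → ℝ)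
    (h0 : ∀ t ∈ A, 0 ≤ μ t) (a' b' : ℝ)
    (hsum' : a' + b' = μ i + μ j) (hprod : a' * b' ≤ μ i * μ j) :
    esum A r (Function.update (Function.update μ i a') j b') ≤ esum A r μ := by
  set ν := Function.update (Function.update μ i a') j b' with hν
  have hνi : ν i = a' := by
    rw [hν, Function.update_of_ne hij, Function.update_self]
  have hνj : ν j = b' := Function.update_self _ _ _
  have hνt : ∀ t, t ≠ i → t ≠ j → ν t = μ t := by
    intro t hti htj
    rw [hν, Function.update_of_ne htj, Function.update_of_ne hti]
  match r with
  | 0 => rw [esum_zero', esum_zero']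
  | 1 =>
    rw [esum_one, esum_one, sum_update_pair hi hj hij, hsum']
    linarith
  | (m + 2) =>
    rw [esum_pair hij hi hj m ν, esum_pair hij hi hj m μ]
    set A' := (A.erase i).erase j with hA'
    have hcongr : ∀ t : ℕ, esum A' t ν = esum A' t μ := by
      intro t
      apply esum_congr
      intro a ha
      exact hνt a (fun h => Finset.notMem_erase _ _ (h ▸ Finset.mem_of_mem_erase ha))
        (fun h => Finset.notMem_erase _ _ (h ▸ ha))
    rw [hνi, hνj, hcongr, hcongr, hcongr, hsum']
    have hE : 0 ≤ esum A' m μ := esum_nonneg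
      (fun t ht => h0 t (Finset.mem_of_mem_erase (Finset.mem_of_mem_erase ht)))
    nlinarith [hprod, hE]

lemma key_base {ι : Type*} [DecidableEq ι] (r : ℕ) (hr1 : 1 ≤ r) (c : ℝ)
    (A : Finset ι) (hr : r ≤ A.card) (μ : ι → ℝ)
    (h0 : ∀ i ∈ A, 0 ≤ μ i) (hcle : ∀ i ∈ A, μ i ≤ c)
    (hsum : ∑ i ∈ A, μ i = r * c)
    (hext : ∀ t ∈ A, μ t = 0 ∨ μ t = c) :
    c ^ r ≤ esum A r μ := by
  have hc : 0 ≤ c := by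
    rcases A.eq_empty_or_nonempty with rfl | ⟨t, ht⟩
    · simp at hr; omega
    · exact le_trans (h0 t ht) (hcle t ht)
  rcases eq_or_lt_of_le hc with rfl | hcpos
  · rw [zero_pow (by omega : r ≠ 0)]
    exact esum_nonneg h0
  · set B := A.filter (fun t => μ t = c) with hB
    have hBsum : ∑ i ∈ A, μ i = B.card * c := by
      rw [← Finset.sum_filter_add_sum_filter_not A (fun t => μ t = c)]
      have h1 : ∑ i ∈ B, μ i = B.card * c := by
        rw [Finset.sum_congr rfl (fun t ht => (Finset.mem_filter.mp ht).2),
          Finset.sum_const, nsmul_eq_mul]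
      have h2 : ∑ i ∈ A.filter (fun t => ¬ μ t = c), μ i = 0 := by
        apply Finset.sum_eq_zero
        intro t ht
        rcases hext t (Finset.mem_filter.mp ht).1 with h | h
        · exact h
        · exact absurd h (Finset.mem_filter.mp ht).2
      rw [h1, h2, add_zero]
    have hBcard : B.card = r := by
      have h := hsum.symm.trans hBsum
      have := mul_right_cancel₀ (ne_of_gt hcpos) h
      exact_mod_cast this.symm
    have hBmem : B ∈ A.powersetCard r :=
      Finset.mem_powersetCard.mpr ⟨Finset.filter_subset _ _, hBcard⟩
    have hBprod : ∏ i ∈ B, μ i = c ^ r := by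
      rw [Finset.prod_congr rfl (fun t ht => (Finset.mem_filter.mp ht).2),
        Finset.prod_const, hBcard]
    rw [← hBprod]
    exact Finset.single_le_sum
      (fun U hU => Finset.prod_nonneg fun i hi =>
        h0 i ((Finset.mem_powersetCard.mp hU).1 hi)) hBmem

lemma key_aux {ι : Type*} [DecidableEq ι] (r : ℕ) (hr1 : 1 ≤ r) (c : ℝ)
    (A : Finset ι) (hr : r ≤ A.card) :
    ∀ N : ℕ, ∀ μ : ι → ℝ, (∀ i ∈ A, 0 ≤ μ i) → (∀ i ∈ A, μ i ≤ c) →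
      (∑ i ∈ A, μ i = r * c) → (A.filter fun t => 0 < μ t ∧ μ t < c).card ≤ N →
      c ^ r ≤ esum A r μ := by
  intro N
  induction N with
  | zero =>
    intro μ h0 hcle hsum hcount
    apply key_base r hr1 c A hr μ h0 hcle hsum
    intro t ht
    have hnot : ¬ (0 < μ t ∧ μ t < c) := by
      intro h
      have : t ∈ A.filter fun t => 0 < μ t ∧ μ t < c := Finset.mem_filter.mpr ⟨ht, h⟩
      rw [Finset.card_eq_zero.mp (Nat.le_zero.mp hcount)] at this
      simp at this
    rcases lt_or_eq_of_le (h0 t ht) with hpos | hzero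
    · right
      by_contra h
      exact hnot ⟨hpos, lt_of_le_of_ne (hcle t ht) h⟩
    · left; exact hzero.symm
  | succ N IH =>
    intro μ h0 hcle hsum hcount
    set I := A.filter fun t => 0 < μ t ∧ μ t < c with hI
    by_cases hle : I.card ≤ N
    · exact IH μ h0 hcle hsum hle
    · have hIcard : I.card = N + 1 := le_antisymm hcount (by omega)
      -- c > 0
      have ⟨t0, ht0⟩ : I.Nonempty := Finset.card_pos.mp (by omega)
      have hcpos : 0 < c :=
        lt_trans (Finset.mem_filter.mp ht0).2.1 (Finset.mem_filter.mp ht0).2.2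
      rcases Nat.eq_zero_or_pos N with rfl | hNpos
      · -- count = 1 : impossible
        exfalso
        obtain ⟨t, htI⟩ := Finset.card_eq_one.mp hIcard
        have htI' : t ∈ I := htI ▸ Finset.mem_singleton_self t
        have htA : t ∈ A := (Finset.mem_filter.mp htI').1
        have htint : 0 < μ t ∧ μ t < c := (Finset.mem_filter.mp htI').2
        set B := A.filter (fun u => μ u = c) with hB
        have hsplit : ∑ i ∈ A, μ i = B.card * c + μ t := by
          rw [← Finset.sum_filter_add_sum_filter_not A (fun u => μ u = c)]
          congr 1
          · rw [Finset.sum_congr rfl (fun u hu => (Finset.mem_filter.mp hu).2),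
              Finset.sum_const, nsmul_eq_mul]
          · -- all non-c elements except t are 0
            have htmem : t ∈ A.filter (fun u => ¬ μ u = c) :=
              Finset.mem_filter.mpr ⟨htA, ne_of_lt htint.2⟩
            rw [Finset.sum_eq_sum_sdiff_singleton_add htmem μ]
            have : ∑ i ∈ (A.filter (fun u => ¬ μ u = c)) \ {t}, μ i = 0 := by
              apply Finset.sum_eq_zero
              intro u hu
              obtain ⟨hu1, hu2⟩ := Finset.mem_sdiff.mp hu
              obtain ⟨huA, huc⟩ := Finset.mem_filter.mp hu1
              by_contra hne
              have hupos : 0 < μ u := lt_of_le_of_ne (h0 u huA) (Ne.symm hne)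
              have hult : μ u < c := lt_of_le_of_ne (hcle u huA) huc
              have : u ∈ I := Finset.mem_filter.mpr ⟨huA, hupos, hult⟩
              rw [htI] at this
              exact (Finset.mem_sdiff.mp hu).2 (by simpa using this)
            rw [this, zero_add]
        have hBr : (B.card : ℝ) < r := by
          by_contra hge
          push_neg at hge
          have : (r : ℝ) * c ≥ B.card * c + μ t := by
            rw [hsum] at hsplit
            linarith [hsplit.le]
          nlinarith [htint.1, mul_le_mul_of_nonneg_right hge hcpos.le]
        have hBr' : B.card ≤ r - 1 := by
          have : B.card < r := by exact_mod_cast hBr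
          omega
        have hmut : μ t = ((r : ℝ) - B.card) * c := by
          rw [hsum] at hsplit
          linarith
        have : c ≤ μ t := by
          rw [hmut]
          have h1 : (1 : ℝ) ≤ (r : ℝ) - B.card := by
            have : (B.card : ℝ) ≤ (r : ℝ) - 1 := by
              have : ((r - 1 : ℕ) : ℝ) = (r : ℝ) - 1 := by
                push_cast [Nat.cast_sub hr1]
                ring
              exact this ▸ Nat.cast_le.mpr hBr'
            linarith
          nlinarith
        linarith [htint.2]
      · -- count ≥ 2 : smooth
        obtain ⟨i, hiI, j, hjI, hij⟩ := Finset.one_lt_card.mp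
          (show 1 < I.card by omega)
        have hiA : i ∈ A := (Finset.mem_filter.mp hiI).1
        have hjA : j ∈ A := (Finset.mem_filter.mp hjI).1
        have hiint : 0 < μ i ∧ μ i < c := (Finset.mem_filter.mp hiI).2
        have hjint : 0 < μ j ∧ μ j < c := (Finset.mem_filter.mp hjI).2
        by_cases hab : μ i + μ j ≤ c
        · set ν := Function.update (Function.update μ i 0) j (μ i + μ j) with hν
          have hνi : ν i = 0 := by
            rw [hν, Function.update_of_ne hij, Function.update_self]
          have hνj : ν j = μ i + μ j := Function.update_self _ _ _
          have hνt : ∀ t, t ≠ i → t ≠ j → ν t = μ t := fun t hti htj => by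
            rw [hν, Function.update_of_ne htj, Function.update_of_ne hti]
          refine le_trans (IH ν ?_ ?_ ?_ ?_)
            (smooth_step hij hiA hjA r μ h0 0 (μ i + μ j) (by ring) (by nlinarith))
          · intro t ht
            rcases eq_or_ne t i with rfl | hti
            · rw [hνi]
            · rcases eq_or_ne t j with rfl | htj
              · rw [hνj]; linarith [hiint.1, hjint.1]
              · rw [hνt t hti htj]; exact h0 t ht
          · intro t ht
            rcases eq_or_ne t i with rfl | hti
            · rw [hνi]; exact hcpos.le
            · rcases eq_or_ne t j with rfl | htj
              · rw [hνj]; exact hab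
              · rw [hνt t hti htj]; exact hcle t ht
          · rw [hν, sum_update_pair hiA hjA hij, hsum]; ring
          · have hsub : A.filter (fun t => 0 < ν t ∧ ν t < c) ⊆ I.erase i := by
              intro t ht
              obtain ⟨htA, ht1, ht2⟩ := Finset.mem_filter.mp ht
              have hti : t ≠ i := fun h => by rw [h, hνi] at ht1; exact lt_irrefl 0 ht1
              refine Finset.mem_erase.mpr ⟨hti, ?_⟩
              rcases eq_or_ne t j with rfl | htj
              · exact hjI
              · rw [hνt t hti htj] at ht1 ht2
                exact Finset.mem_filter.mpr ⟨htA, ht1, ht2⟩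
            calc (A.filter (fun t => 0 < ν t ∧ ν t < c)).card
                ≤ (I.erase i).card := Finset.card_le_card hsub
              _ ≤ N := by rw [Finset.card_erase_of_mem hiI, hIcard]; omega
        · push_neg at hab
          set ν := Function.update (Function.update μ i (μ i + μ j - c)) j c with hν
          have hνi : ν i = μ i + μ j - c := by
            rw [hν, Function.update_of_ne hij, Function.update_self]
          have hνj : ν j = c := Function.update_self _ _ _
          have hνt : ∀ t, t ≠ i → t ≠ j → ν t = μ t := fun t hti htj => by
            rw [hν, Function.update_of_ne htj, Function.update_of_ne hti]
          refine le_trans (IH ν ?_ ?_ ?_ ?_)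
            (smooth_step hij hiA hjA r μ h0 (μ i + μ j - c) c (by ring)
              (by nlinarith [mul_nonneg (sub_nonneg.mpr hiint.2.le) (sub_nonneg.mpr hjint.2.le)]))
          · intro t ht
            rcases eq_or_ne t i with rfl | hti
            · rw [hνi]; linarith
            · rcases eq_or_ne t j with rfl | htj
              · rw [hνj]; exact hcpos.le
              · rw [hνt t hti htj]; exact h0 t ht
          · intro t ht
            rcases eq_or_ne t i with rfl | hti
            · rw [hνi]; linarith [hiint.2, hjint.2]
            · rcases eq_or_ne t j with rfl | htj
              · rw [hνj]
              · rw [hνt t hti htj]; exact hcle t ht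
          · rw [hν, sum_update_pair hiA hjA hij, hsum]; ring
          · have hsub : A.filter (fun t => 0 < ν t ∧ ν t < c) ⊆ I.erase j := by
              intro t ht
              obtain ⟨htA, ht1, ht2⟩ := Finset.mem_filter.mp ht
              have htj : t ≠ j := fun h => by rw [h, hνj] at ht2; exact lt_irrefl c ht2
              refine Finset.mem_erase.mpr ⟨htj, ?_⟩
              rcases eq_or_ne t i with rfl | hti
              · exact hiI
              · rw [hνt t hti htj] at ht1 ht2
                exact Finset.mem_filter.mpr ⟨htA, ht1, ht2⟩
            calc (A.filter (fun t => 0 < ν t ∧ ν t < c)).card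
                ≤ (I.erase j).card := Finset.card_le_card hsub
              _ ≤ N := by rw [Finset.card_erase_of_mem hjI, hIcard]; omega

end Aux

/-- For any nonnegative `x̂ ∈ ℝⁿ`,
`∑_{|S|=s} (∏_{i∈S} x̂ᵢ) det(V_Sᵀ V_S) ≥ exp(Γ_s(∑ x̂ᵢ vᵢvᵢᵀ))`. -/
theorem stmt_8 (d n s : ℕ) (hs1 : 1 ≤ s) (hsd : s ≤ d)
    (V : Matrix (Fin d) (Fin n) ℝ)
    (x : Fin n → ℝ) (hx0 : ∀ i, 0 ≤ x i)
    (lam : Fin d → ℝ) (hsort : Antitone lam) (hnn : ∀ i, 0 ≤ lam i)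
    (hdecomp : IsSpectralDecomp
      (∑ i, x i • vecMulVec (fun a => V a i) (fun a => V a i)) lam)
    (k : ℕ) (hk : IsKIndex lam s k) :
    (∏ i ∈ Finset.univ.filter (fun i : Fin d => (i : ℕ) < k), lam i)
        * (tailSum lam k / ((s : ℝ) - k)) ^ (s - k)
      ≤ ∑ S ∈ Finset.univ.powersetCard s,
          (∏ i ∈ S, x i) * (subSub (Vᵀ * V) S).det := by
  obtain ⟨hks, hk2, -⟩ := hk
  obtain ⟨Q, hQ, hX⟩ := hdecomp
  set r := s - k with hr
  have hr1 : 1 ≤ r := by omega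
  have hkd : k < d := lt_of_lt_of_le hks hsd
  set K := Finset.univ.filter (fun i : Fin d => (i : ℕ) < k) with hK
  set Tail := Finset.univ.filter (fun i : Fin d => k ≤ (i : ℕ)) with hTail
  set c := tailSum lam k / ((s : ℝ) - k) with hc
  have hcast : ((r : ℕ) : ℝ) = (s : ℝ) - k := by
    push_cast [hr, Nat.cast_sub hks.le]
    ring
  have hrpos : (0 : ℝ) < (s : ℝ) - k := by
    rw [← hcast]
    exact_mod_cast hr1
  have htail_eq : tailSum lam k = ∑ i ∈ Tail, lam i := rfl
  have htail_nonneg : 0 ≤ tailSum lam k :=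
    Finset.sum_nonneg fun i _ => hnn i
  have hc0 : 0 ≤ c := div_nonneg htail_nonneg hrpos.le
  have hKcard : K.card = k := by
    have : K = Finset.Iio (⟨k, hkd⟩ : Fin d) := by
      ext i
      simp [hK, Finset.mem_Iio, Fin.lt_def]
    rw [this, Fin.card_Iio]
  have hKT : Disjoint K Tail := by
    rw [Finset.disjoint_left]
    intro i hiK hiT
    rw [hK, Finset.mem_filter] at hiK
    rw [hTail, Finset.mem_filter] at hiT
    omega
  have hKTcard : K.card + Tail.card = d := by
    rw [← Finset.card_union_of_disjoint hKT]
    have : K ∪ Tail = Finset.univ := by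
      ext i
      constructor
      · intro _; exact Finset.mem_univ i
      · intro _
        rcases lt_or_ge (i : ℕ) k with h | h
        · exact Finset.mem_union_left _ (by rw [hK]; simp [h])
        · exact Finset.mem_union_right _ (by rw [hTail]; simp [h])
    rw [this, Finset.card_univ, Fintype.card_fin]
  have hTailcard : Tail.card = d - k := by omega
  have hrT : r ≤ Tail.card := by omega
  have hbound : ∀ i ∈ Tail, lam i ≤ c := by
    intro i hi
    rw [hTail, Finset.mem_filter] at hi
    have h1 : lam i ≤ lam ⟨k, hkd⟩ := hsort (by rw [Fin.le_def]; exact hi.2)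
    have h2 : extVal lam k = lam ⟨k, hkd⟩ := dif_pos hkd
    rw [← h2] at h1
    exact le_trans h1 hk2
  have hsumtail : ∑ i ∈ Tail, lam i = r * c := by
    rw [← htail_eq, hc, hcast]
    field_simp
  have hkey : c ^ r ≤ esum Tail r lam :=
    key_aux r hr1 c Tail hrT _ lam (fun i _ => hnn i) hbound hsumtail le_rfl
  have hexpand : (∏ i ∈ K, lam i) * esum Tail r lam
      = ∑ U ∈ Tail.powersetCard r, ∏ i ∈ K ∪ U, lam i := by
    rw [esum, Finset.mul_sum]
    apply Finset.sum_congr rfl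
    intro U hU
    rw [Finset.prod_union (hKT.mono_right ((Finset.mem_powersetCard.mp hU).1))]
  have hinj : ∀ U ∈ Tail.powersetCard r, ∀ U' ∈ Tail.powersetCard r,
      K ∪ U = K ∪ U' → U = U' := by
    intro U hU U' hU' hEq
    have key : ∀ W ∈ Tail.powersetCard r, (K ∪ W) ∩ Tail = W := by
      intro W hW
      rw [Finset.union_inter_distrib_right,
        Finset.disjoint_iff_inter_eq_empty.mp hKT,
        Finset.inter_eq_left.mpr (Finset.mem_powersetCard.mp hW).1,
        Finset.empty_union]
    rw [← key U hU, ← key U' hU', hEq]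
  have himage : ((Tail.powersetCard r).image (fun U => K ∪ U)) ⊆
      (Finset.univ : Finset (Fin d)).powersetCard s := by
    intro T hT
    obtain ⟨U, hU, rfl⟩ := Finset.mem_image.mp hT
    refine Finset.mem_powersetCard.mpr ⟨Finset.subset_univ _, ?_⟩
    rw [Finset.card_union_of_disjoint (hKT.mono_right (Finset.mem_powersetCard.mp hU).1),
      hKcard, (Finset.mem_powersetCard.mp hU).2]
    omega
  have hstep : ∑ U ∈ Tail.powersetCard r, ∏ i ∈ K ∪ U, lam i
      ≤ ∑ T ∈ (Finset.univ : Finset (Fin d)).powersetCard s, ∏ i ∈ T, lam i := by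
    calc ∑ U ∈ Tail.powersetCard r, ∏ i ∈ K ∪ U, lam i
        = ∑ T ∈ (Tail.powersetCard r).image (fun U => K ∪ U), ∏ i ∈ T, lam i :=
          (Finset.sum_image (f := fun T => ∏ i ∈ T, lam i) hinj).symm
      _ ≤ _ := Finset.sum_le_sum_of_subset_of_nonneg himage
          (fun T _ _ => Finset.prod_nonneg fun i _ => hnn i)
  have hmain := main_identity d n V x hx0 lam Q hQ hX s
  calc (∏ i ∈ K, lam i) * c ^ r
      ≤ (∏ i ∈ K, lam i) * esum Tail r lam :=
        mul_le_mul_of_nonneg_left hkey (Finset.prod_nonneg fun i _ => hnn i)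
    _ = ∑ U ∈ Tail.powersetCard r, ∏ i ∈ K ∪ U, lam i := hexpand
    _ ≤ ∑ T ∈ (Finset.univ : Finset (Fin d)).powersetCard s, ∏ i ∈ T, lam i := hstep
    _ = ∑ S ∈ Finset.univ.powersetCard s, (∏ i ∈ S, x i) * (subSub (Vᵀ * V) S).det :=
        hmain.symm
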